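/- Let p, q be twice continuously differentiable real functions on an interval (a,b) and let f be a solution of f'' + p·f' + q·f = 0 on (a,b). Then w(f) = a₀·f³ + a₁·f'·f² + a₂·(f')²·f + a₃·(f')³, where a₀ = 2p'q² − pqq' + (q')² − q''q, a₁ = 3p'pq − p''q − 2qq' − p²q' + 2p'q' − pq'', a₂ = (p')² + p²p' − pp'' + 2p'q − 3pq' − q'', and a₃ = pp' − p'' − 2q'. -/

import Mathlib

/-- Determinant of the 3x3 Hankel-Wronskian matrix of h (rows of 2nd..4th derivatives). -/
noncomputable def w (f : ℝ → ℝ) (x : ℝ) : ℝ :=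
  Matrix.det !![deriv^[2] f x, deriv f x, f x;
    deriv^[3] f x, deriv^[2] f x, deriv f x;
    deriv^[4] f x, deriv^[3] f x, deriv^[2] f x]


theorem stmt_11 (a b : ℝ) (hab : a < b) (p q f : ℝ → ℝ)
    (hp : ContDiffOn ℝ 2 p (Set.Ioo a b)) (hq : ContDiffOn ℝ 2 q (Set.Ioo a b))
    (hf : ContDiffOn ℝ 4 f (Set.Ioo a b))
    (hode : ∀ x ∈ Set.Ioo a b, deriv^[2] f x + p x * deriv f x + q x * f x = 0) :
    ∀ x ∈ Set.Ioo a b,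
      w f x =
        (2 * deriv p x * (q x) ^ 2 - p x * q x * deriv q x + (deriv q x) ^ 2 -
            deriv^[2] q x * q x) * (f x) ^ 3 +
        (3 * deriv p x * p x * q x - deriv^[2] p x * q x - 2 * q x * deriv q x -
            (p x) ^ 2 * deriv q x + 2 * deriv p x * deriv q x - p x * deriv^[2] q x) *
          deriv f x * (f x) ^ 2 +
        ((deriv p x) ^ 2 + (p x) ^ 2 * deriv p x - p x * deriv^[2] p x +
            2 * deriv p x * q x - 3 * p x * deriv q x - deriv^[2] q x) *
          (deriv f x) ^ 2 * f x +
        (p x * deriv p x - deriv^[2] p x - 2 * deriv q x) * (deriv f x) ^ 3 := by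
  have hio : IsOpen (Set.Ioo a b) := isOpen_Ioo
  have hpd : ∀ y ∈ Set.Ioo a b, DifferentiableAt ℝ p y := fun y hy =>
    (hp.differentiableOn (by norm_num)).differentiableAt (hio.mem_nhds hy)
  have hqd : ∀ y ∈ Set.Ioo a b, DifferentiableAt ℝ q y := fun y hy =>
    (hq.differentiableOn (by norm_num)).differentiableAt (hio.mem_nhds hy)
  have hfd : ∀ y ∈ Set.Ioo a b, DifferentiableAt ℝ f y := fun y hy =>
    (hf.differentiableOn (by norm_num)).differentiableAt (hio.mem_nhds hy)
  have hp1 : ContDiffOn ℝ 1 (deriv p) (Set.Ioo a b) :=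
    hp.deriv_of_isOpen hio (by norm_num)
  have hq1 : ContDiffOn ℝ 1 (deriv q) (Set.Ioo a b) :=
    hq.deriv_of_isOpen hio (by norm_num)
  have hf1 : ContDiffOn ℝ 3 (deriv f) (Set.Ioo a b) :=
    hf.deriv_of_isOpen hio (by norm_num)
  have hpd' : ∀ y ∈ Set.Ioo a b, DifferentiableAt ℝ (deriv p) y := fun y hy =>
    (hp1.differentiableOn (by norm_num)).differentiableAt (hio.mem_nhds hy)
  have hqd' : ∀ y ∈ Set.Ioo a b, DifferentiableAt ℝ (deriv q) y := fun y hy =>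
    (hq1.differentiableOn (by norm_num)).differentiableAt (hio.mem_nhds hy)
  have hfd' : ∀ y ∈ Set.Ioo a b, DifferentiableAt ℝ (deriv f) y := fun y hy =>
    (hf1.differentiableOn (by norm_num)).differentiableAt (hio.mem_nhds hy)
  have h2 : ∀ y ∈ Set.Ioo a b, deriv^[2] f y = -(p y * deriv f y + q y * f y) := by
    intro y hy
    have := hode y hy
    linarith
  have h3 : ∀ y ∈ Set.Ioo a b, deriv^[3] f y =
      (p y * p y - deriv p y - q y) * deriv f y + (p y * q y - deriv q y) * f y := by
    intro y hy
    have heq : deriv^[2] f =ᶠ[nhds y] fun z => -(p z * deriv f z + q z * f z) :=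
      Filter.eventually_of_mem (hio.mem_nhds hy) (fun z hz => h2 z hz)
    have hit : deriv^[3] f y = deriv (deriv^[2] f) y := by
      rw [Function.iterate_succ_apply' deriv 2 f]
    rw [hit, heq.deriv_eq]
    have Hp := (hpd y hy).hasDerivAt
    have Hq := (hqd y hy).hasDerivAt
    have Hf := (hfd y hy).hasDerivAt
    have Hf' : HasDerivAt (deriv f) (deriv^[2] f y) y := by
      have := (hfd' y hy).hasDerivAt
      simpa [Function.iterate_succ_apply'] using this
    have H : HasDerivAt (fun z => -(p z * deriv f z + q z * f z))
        (-((deriv p y * deriv f y + p y * deriv^[2] f y) +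
          (deriv q y * f y + q y * deriv f y))) y :=
      ((Hp.mul Hf').add (Hq.mul Hf)).neg
    rw [H.deriv, h2 y hy]
    ring
  intro x hx
  have Hp := (hpd x hx).hasDerivAt
  have Hq := (hqd x hx).hasDerivAt
  have Hf := (hfd x hx).hasDerivAt
  have Hf' : HasDerivAt (deriv f) (deriv^[2] f x) x := by
    have := (hfd' x hx).hasDerivAt
    simpa [Function.iterate_succ_apply'] using this
  have Hp' : HasDerivAt (deriv p) (deriv^[2] p x) x := by
    have := (hpd' x hx).hasDerivAt
    simpa [Function.iterate_succ_apply'] using this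
  have Hq' : HasDerivAt (deriv q) (deriv^[2] q x) x := by
    have := (hqd' x hx).hasDerivAt
    simpa [Function.iterate_succ_apply'] using this
  have h4 : deriv^[4] f x =
      (deriv p x * p x + p x * deriv p x - deriv^[2] p x - deriv q x) * deriv f x +
        (p x * p x - deriv p x - q x) * deriv^[2] f x +
        ((deriv p x * q x + p x * deriv q x - deriv^[2] q x) * f x +
          (p x * q x - deriv q x) * deriv f x) := by
    have heq : deriv^[3] f =ᶠ[nhds x] fun z =>
        (p z * p z - deriv p z - q z) * deriv f z + (p z * q z - deriv q z) * f z :=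
      Filter.eventually_of_mem (hio.mem_nhds hx) (fun z hz => h3 z hz)
    have hit : deriv^[4] f x = deriv (deriv^[3] f) x := by
      rw [Function.iterate_succ_apply' deriv 3 f]
    rw [hit, heq.deriv_eq]
    have H1 : HasDerivAt (fun z => p z * p z - deriv p z - q z)
        (deriv p x * p x + p x * deriv p x - deriv^[2] p x - deriv q x) x :=
      ((Hp.mul Hp).sub Hp').sub Hq
    have H2 : HasDerivAt (fun z => p z * q z - deriv q z)
        (deriv p x * q x + p x * deriv q x - deriv^[2] q x) x :=
      (Hp.mul Hq).sub Hq'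
    have H : HasDerivAt (fun z =>
        (p z * p z - deriv p z - q z) * deriv f z + (p z * q z - deriv q z) * f z)
        ((deriv p x * p x + p x * deriv p x - deriv^[2] p x - deriv q x) * deriv f x +
          (p x * p x - deriv p x - q x) * deriv^[2] f x +
          ((deriv p x * q x + p x * deriv q x - deriv^[2] q x) * f x +
            (p x * q x - deriv q x) * deriv f x)) x :=
      (H1.mul Hf').add (H2.mul Hf)
    exact H.deriv
  have e2 := h2 x hx
  have e3 := h3 x hx
  rw [e2] at h4
  unfold w
  rw [Matrix.det_fin_three]
  norm_num [Matrix.cons_val_zero, Matrix.cons_val_one, Matrix.head_cons, Matrix.cons_val_two, Matrix.tail_cons]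
  simp only [Function.iterate_succ, Function.iterate_zero, Function.comp_apply, id_eq] at e2 e3 h4
  rw [e2, e3, h4]
  ring
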